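/- arXiv:1708.09791 — 2 statements merged into one kernel-verified Lean document; each statement's English description precedes it below -/
import Mathlib

section
/- Under the same hypotheses on p (measurable, symmetric, positive a.e., normalized), the kernel of the operator L on L²(S^d) consists exactly of the constant functions; i.e., Lφ = 0 (a.e.) implies φ is a.e. equal to its mean ⟨φ⟩ = (1/|S^d|)∫ φ dω. -/
open MeasureTheory Metric Set
noncomputable section
open scoped ENNReal NNReal

/-- The unit sphere `S^d` lives in `E = ℝ^{d+1}` (Euclidean space). -/
abbrev Esp (d : ℕ) := EuclideanSpace ℝ (Fin (d+1))

/-- The surface measure on the unit sphere `S^d ⊂ ℝ^{d+1}`: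
the `d`-dimensional Hausdorff measure restricted to the sphere. -/
noncomputable def sphμ (d : ℕ) : Measure (Esp d) := (μH[(d : ℝ)]).restrict (Metric.sphere 0 1)


noncomputable section

/-- In `ℝ^n` (Euclidean), the `n`-dimensional Hausdorff measure of a bounded set is finite. -/
lemma bounded_hausdorff_lt_top {n : ℕ} {s : Set (EuclideanSpace ℝ (Fin n))}
    (hs : Bornology.IsBounded s) : μH[(n : ℝ)] s < ⊤ := by
  classical
  set e := WithLp.equiv 2 (Fin n → ℝ)
  have hanti := PiLp.antilipschitzWith_ofLp 2 (fun _ : Fin n => ℝ)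
  obtain ⟨K, hlipsymm⟩ : ∃ K : ℝ≥0, LipschitzWith K e.symm :=
    ⟨_, fun x y => by simpa [e, WithLp.equiv_symm_apply] using hanti (e.symm x) (e.symm y)⟩
  have hlip := PiLp.lipschitzWith_ofLp 2 (fun _ : Fin n => ℝ)
  have himg : s = e.symm '' (e '' s) := by
    rw [Set.image_image]; simp
  calc μH[(n:ℝ)] s = μH[(n:ℝ)] (e.symm '' (e '' s)) := by rw [← himg]
    _ ≤ (K : ℝ≥0∞) ^ (n:ℝ) * μH[(n:ℝ)] (e '' s) :=
        hlipsymm.hausdorffMeasure_image_le (by positivity) _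
    _ < ⊤ := by
      apply ENNReal.mul_lt_top
      · exact ENNReal.rpow_lt_top_of_nonneg (by positivity) (by simp)
      · have hvol : (μH[(n:ℝ)] : Measure (Fin n → ℝ)) = volume := by
          have := hausdorffMeasure_pi_real (ι := Fin n)
          simpa using this
        rw [hvol]
        have hb : Bornology.IsBounded (e '' s) := (hlip.isBounded_image hs)
        have hc : IsCompact (closure (e '' s)) := hb.isCompact_closure
        exact lt_of_le_of_lt (measure_mono subset_closure) hc.measure_lt_top



def insNth {d : ℕ} (i : Fin (d+1)) (c : ℝ) (y : EuclideanSpace ℝ (Fin d)) :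
    EuclideanSpace ℝ (Fin (d+1)) :=
  (WithLp.equiv 2 (Fin (d+1) → ℝ)).symm (Fin.insertNth i c (WithLp.equiv 2 (Fin d → ℝ) y))

lemma insNth_same {d : ℕ} (i : Fin (d+1)) (c : ℝ) (y : EuclideanSpace ℝ (Fin d)) :
    insNth i c y i = c := by
  simp [insNth]

lemma insNth_succAbove {d : ℕ} (i : Fin (d+1)) (c : ℝ) (y : EuclideanSpace ℝ (Fin d))
    (k : Fin d) : insNth i c y (i.succAbove k) = y k := by
  simp [insNth]

lemma insertNth_isometry {d : ℕ} (i : Fin (d+1)) (c : ℝ) :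
    Isometry (insNth i c) := by
  intro x y
  rw [edist_dist, edist_dist]
  congr 1
  rw [EuclideanSpace.dist_eq, EuclideanSpace.dist_eq]
  congr 1
  rw [Fin.sum_univ_succAbove (fun j => dist (insNth i c x j) (insNth i c y j) ^ 2) i]
  simp [insNth_same, insNth_succAbove]

lemma face_hausdorff_lt_top {d : ℕ} (i : Fin (d+1)) (c : ℝ) (R : ℝ) :
    μH[(d : ℝ)] {x : EuclideanSpace ℝ (Fin (d+1)) | x i = c ∧ ‖x‖ ≤ R} < ⊤ := by
  classical
  set f := insNth i c with hf
  have hiso : Isometry f := insertNth_isometry i c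
  have hsub : {x : EuclideanSpace ℝ (Fin (d+1)) | x i = c ∧ ‖x‖ ≤ R} ⊆
      f '' (Metric.closedBall 0 R) := by
    rintro x ⟨hxi, hxR⟩
    refine ⟨(WithLp.equiv 2 (Fin d → ℝ)).symm (i.removeNth x), ?_, ?_⟩
    · rw [mem_closedBall_zero_iff]
      refine le_trans ?_ hxR
      rw [EuclideanSpace.norm_eq, EuclideanSpace.norm_eq]
      apply Real.sqrt_le_sqrt
      rw [Fin.sum_univ_succAbove (fun j => ‖x j‖ ^ 2) i]
      simp only [WithLp.equiv_symm_apply, PiLp.toLp_apply, le_add_iff_nonneg_left, Fin.removeNth]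
      positivity
    · show (WithLp.equiv 2 (Fin (d+1) → ℝ)).symm (Fin.insertNth i c (i.removeNth x)) = x
      rw [← hxi, Fin.insertNth_self_removeNth]
      rfl
  calc μH[(d:ℝ)] {x : EuclideanSpace ℝ (Fin (d+1)) | x i = c ∧ ‖x‖ ≤ R}
      ≤ μH[(d:ℝ)] (f '' (Metric.closedBall 0 R)) := measure_mono hsub
    _ = μH[(d:ℝ)] (Metric.closedBall (0 : EuclideanSpace ℝ (Fin d)) R) :=
        hiso.hausdorffMeasure_image (Or.inl (by positivity)) _
    _ < ⊤ := bounded_hausdorff_lt_top Metric.isBounded_closedBall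

lemma normalize_lipschitzOn {E : Type*} [NormedAddCommGroup E] [NormedSpace ℝ E] :
    LipschitzOnWith 2 (fun x : E => ‖x‖⁻¹ • x) {x : E | 1 ≤ ‖x‖} := by
  apply LipschitzOnWith.of_dist_le_mul
  intro x hx y hy
  simp only [Set.mem_setOf_eq] at hx hy
  have hx0 : (0:ℝ) < ‖x‖ := lt_of_lt_of_le one_pos hx
  have hy0 : (0:ℝ) < ‖y‖ := lt_of_lt_of_le one_pos hy
  rw [dist_eq_norm]
  have key : ‖x‖⁻¹ • x - ‖y‖⁻¹ • y = ‖x‖⁻¹ • (x - y) + (‖x‖⁻¹ - ‖y‖⁻¹) • y := by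
    rw [smul_sub, sub_smul]; abel
  rw [key]
  calc ‖‖x‖⁻¹ • (x - y) + (‖x‖⁻¹ - ‖y‖⁻¹) • y‖
      ≤ ‖‖x‖⁻¹ • (x - y)‖ + ‖(‖x‖⁻¹ - ‖y‖⁻¹) • y‖ := norm_add_le _ _
    _ = ‖x‖⁻¹ * ‖x - y‖ + |‖x‖⁻¹ - ‖y‖⁻¹| * ‖y‖ := by
        rw [norm_smul, norm_smul, norm_inv, norm_norm, Real.norm_eq_abs]
    _ ≤ 1 * ‖x - y‖ + (‖x - y‖ / (‖x‖ * ‖y‖)) * ‖y‖ := by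
        gcongr
        · exact inv_le_one_of_one_le₀ hx
        · rw [abs_sub_comm, ← one_div, ← one_div, div_sub_div _ _ (ne_of_gt hy0) (ne_of_gt hx0),
            abs_div, abs_of_pos (mul_pos hy0 hx0)]
          rw [div_le_div_iff₀ (mul_pos hy0 hx0) (mul_pos hx0 hy0)]
          rw [one_mul, mul_one, mul_comm ‖y‖ ‖x‖]
          gcongr
          exact abs_norm_sub_norm_le x y
    _ = ‖x - y‖ + ‖x - y‖ / ‖x‖ := by
        field_simp
    _ ≤ ‖x - y‖ + ‖x - y‖ / 1 := by gcongr
    _ = 2 * dist x y := by rw [dist_eq_norm]; ring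

lemma coord_le_norm {d : ℕ} (x : EuclideanSpace ℝ (Fin (d+1))) (i : Fin (d+1)) :
    |x i| ≤ ‖x‖ := by
  rw [EuclideanSpace.norm_eq, ← Real.sqrt_sq_eq_abs (x i)]
  apply Real.sqrt_le_sqrt
  calc (x i) ^ 2 = ‖x i‖ ^ 2 := by rw [Real.norm_eq_abs, sq_abs]
    _ ≤ ∑ j, ‖x j‖ ^ 2 :=
      Finset.single_le_sum (f := fun j => ‖x j‖ ^ 2) (fun j _ => by positivity)
        (Finset.mem_univ i)

lemma sphere_subset_image {d : ℕ} :
    Metric.sphere (0 : EuclideanSpace ℝ (Fin (d+1))) 1 ⊆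
      (fun x : EuclideanSpace ℝ (Fin (d+1)) => ‖x‖⁻¹ • x) ''
        (⋃ i : Fin (d+1), ({x | x i = 1 ∧ ‖x‖ ≤ (d+1)} ∪ {x | x i = -1 ∧ ‖x‖ ≤ (d+1)})) := by
  intro x hx
  have hxn : ‖x‖ = 1 := by simpa using hx
  -- pick a coordinate of maximal absolute value
  obtain ⟨i, _, hi⟩ := Finset.exists_max_image Finset.univ (fun j => |x j|) ⟨0, Finset.mem_univ 0⟩
  set m := |x i| with hm
  have hmpos : 0 < m := by
    rcases lt_or_ge 0 m with h | h
    · exact h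
    · exfalso
      have : x = 0 := by
        ext j
        have hj := hi j (Finset.mem_univ j)
        have h0 : |x j| = 0 := le_antisymm (le_trans hj h) (abs_nonneg _)
        show x j = 0
        exact abs_eq_zero.mp h0
      rw [this] at hxn; simp at hxn
  -- m ≥ 1/(d+1): since 1 = ‖x‖ ≤ √((d+1) m²)
  have hmlb : 1 ≤ (d+1) * m ^ 2 := by
    have h1 : (1:ℝ) = ∑ j, ‖x j‖ ^ 2 := by
      have := hxn
      rw [EuclideanSpace.norm_eq] at this
      have h2 : ∑ j, ‖x j‖ ^ 2 = 1 := by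
        have hnn : (0:ℝ) ≤ ∑ j, ‖x j‖ ^ 2 := by positivity
        nlinarith [Real.sq_sqrt hnn, this]
      linarith
    have h3 : ∑ j, ‖x j‖ ^ 2 ≤ ∑ _j : Fin (d+1), m ^ 2 := by
      apply Finset.sum_le_sum
      intro j _
      have := hi j (Finset.mem_univ j)
      rw [Real.norm_eq_abs]
      nlinarith [abs_nonneg (x j)]
    rw [Finset.sum_const, Finset.card_univ, Fintype.card_fin, nsmul_eq_mul] at h3
    push_cast at h3 ⊢
    nlinarith
  set y : EuclideanSpace ℝ (Fin (d+1)) := m⁻¹ • x with hy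
  have hyn : ‖y‖ = m⁻¹ := by
    rw [hy, norm_smul, norm_inv, Real.norm_eq_abs, abs_abs, hxn, mul_one]
  have hybd : ‖y‖ ≤ (d+1 : ℝ) := by
    rw [hyn]
    rw [inv_le_iff_one_le_mul₀ hmpos]
    nlinarith [hmpos]
  refine ⟨y, ?_, ?_⟩
  · apply Set.mem_iUnion.mpr
    refine ⟨i, ?_⟩
    have hyi : y i = m⁻¹ * x i := by simp [hy]
    rcases abs_cases (x i) with ⟨h1, _⟩ | ⟨h1, _⟩
    · left
      constructor
      · rw [hyi, ← h1, ← hm, inv_mul_cancel₀ (ne_of_gt hmpos)]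
      · exact hybd
    · right
      constructor
      · rw [hyi]
        have : x i = -m := by rw [hm, h1]; ring
        rw [this]
        field_simp
      · exact hybd
  · show ‖y‖⁻¹ • y = x
    rw [hyn, hy, inv_inv, smul_smul, mul_inv_cancel₀ (ne_of_gt hmpos), one_smul]

set_option maxHeartbeats 1000000 in
lemma sphere_hausdorff_lt_top (d : ℕ) :
    μH[(d : ℝ)] (Metric.sphere (0 : EuclideanSpace ℝ (Fin (d+1))) 1) < ⊤ := by
  classical
  set C : Set (EuclideanSpace ℝ (Fin (d+1))) :=
    ⋃ i : Fin (d+1), ({x | x i = 1 ∧ ‖x‖ ≤ (d+1)} ∪ {x | x i = -1 ∧ ‖x‖ ≤ (d+1)}) with hC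
  have hCfin : μH[(d:ℝ)] C < ⊤ := by
    have hface : ∀ i : Fin (d+1),
        μH[(d:ℝ)] (({x | x i = 1 ∧ ‖x‖ ≤ (d+1)} ∪ {x | x i = -1 ∧ ‖x‖ ≤ (d+1)}) :
          Set (EuclideanSpace ℝ (Fin (d+1)))) < ⊤ := by
      intro i
      refine lt_of_le_of_lt (measure_union_le _ _) (ENNReal.add_lt_top.mpr ⟨?_, ?_⟩)
      · exact face_hausdorff_lt_top i 1 (d+1)
      · exact face_hausdorff_lt_top i (-1) (d+1)
    refine lt_of_le_of_lt (measure_iUnion_le _) ?_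
    rw [tsum_fintype]
    exact ENNReal.sum_lt_top.mpr fun i _ => hface i
  have hCn : C ⊆ {x : EuclideanSpace ℝ (Fin (d+1)) | 1 ≤ ‖x‖} := by
    intro x hxC
    obtain ⟨i, hxi⟩ := Set.mem_iUnion.mp hxC
    rcases hxi with ⟨h1, _⟩ | ⟨h1, _⟩
    · calc (1:ℝ) = |x i| := by rw [h1]; simp
        _ ≤ ‖x‖ := coord_le_norm x i
    · calc (1:ℝ) = |x i| := by rw [h1]; simp
        _ ≤ ‖x‖ := coord_le_norm x i
  have hlip : LipschitzOnWith 2 (fun x : EuclideanSpace ℝ (Fin (d+1)) => ‖x‖⁻¹ • x) C :=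
    normalize_lipschitzOn.mono hCn
  refine lt_of_le_of_lt (measure_mono sphere_subset_image) ?_
  refine lt_of_le_of_lt (hlip.hausdorffMeasure_image_le (by positivity)) ?_
  exact ENNReal.mul_lt_top (ENNReal.rpow_lt_top_of_nonneg (by positivity) (by simp)) hCfin

instance sphμ_finite (d : ℕ) : IsFiniteMeasure (sphμ d) :=
  ⟨by rw [sphμ, Measure.restrict_apply_univ]; exact sphere_hausdorff_lt_top d⟩

lemma ofReal_twosum (a b : ℝ) :
    ENNReal.ofReal (2 * a + 2 * b) ≤ 2 * ENNReal.ofReal a + 2 * ENNReal.ofReal b := by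
  refine le_trans ENNReal.ofReal_add_le ?_
  rw [ENNReal.ofReal_mul (by norm_num), ENNReal.ofReal_mul (by norm_num)]
  norm_num

/-- the kernel of `L` consists exactly of the constants:
`Lφ = 0` a.e. implies `φ` equals its mean a.e. -/
theorem stmt2 (d : ℕ) (p : Esp d → Esp d → ℝ)
    (hmeas : Measurable (Function.uncurry p))
    (hsymm : ∀ ω ω', p ω ω' = p ω' ω)
    (hpos : ∀ᵐ w ∂((sphμ d).prod (sphμ d)), 0 < p w.1 w.2)
    (hnorm : ∀ᵐ ω ∂(sphμ d), ∫ ω', p ω ω' ∂(sphμ d) = 1)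
    (φ : Esp d → ℝ) (hφ : MemLp φ 2 (sphμ d))
    (hker : ∀ᵐ ω ∂(sphμ d), ∫ ω', p ω ω' * (φ ω - φ ω') ∂(sphμ d) = 0) :
    ∀ᵐ ω ∂(sphμ d), φ ω = (∫ ω', φ ω' ∂(sphμ d)) / ((sphμ d) univ).toReal := by
  set μ := sphμ d with hμdef
  by_cases hμ0 : μ = 0
  · simp [hμ0]
  -- a measurable representative of φ
  obtain ⟨hΦsm, hΦeq⟩ : StronglyMeasurable (hφ.1.mk φ) ∧ φ =ᵐ[μ] hφ.1.mk φ :=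
    ⟨hφ.1.stronglyMeasurable_mk, hφ.1.ae_eq_mk⟩
  set Φ := hφ.1.mk φ with hΦdef
  have hΦm : Measurable Φ := hΦsm.measurable
  have hΦL2 : MemLp Φ 2 μ := hφ.ae_eq hΦeq
  have hΦsq : Integrable (fun ω => Φ ω ^ 2) μ := hΦL2.integrable_sq
  -- transfer a.e. equality to product coordinates
  have hfst : (fun w : Esp d × Esp d => φ w.1) =ᵐ[μ.prod μ] (fun w => Φ w.1) :=
    Measure.quasiMeasurePreserving_fst.ae_eq_comp hΦeq
  have hsnd : (fun w : Esp d × Esp d => φ w.2) =ᵐ[μ.prod μ] (fun w => Φ w.2) :=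
    Measure.quasiMeasurePreserving_snd.ae_eq_comp hΦeq
  -- section facts from hnorm
  have hppos_ae : ∀ᵐ ω ∂μ, ∀ᵐ ω' ∂μ, 0 < p ω ω' := Measure.ae_ae_of_ae_prod hpos
  have hnorm' : ∀ᵐ ω ∂μ, Integrable (fun ω' => p ω ω') μ ∧ ∫ ω', p ω ω' ∂μ = 1 := by
    filter_upwards [hnorm] with ω h
    refine ⟨?_, h⟩
    by_contra hni
    rw [integral_undef hni] at h; norm_num at h
  have hPone : ∀ᵐ ω ∂μ, ∫⁻ ω', ENNReal.ofReal (p ω ω') ∂μ = 1 := by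
    filter_upwards [hnorm', hppos_ae] with ω h hp
    rw [← ofReal_integral_eq_lintegral_ofReal h.1 (hp.mono fun _ h => le_of_lt h), h.2,
      ENNReal.ofReal_one]
  -- measurability bits
  have hpm : Measurable (fun w : Esp d × Esp d => p w.1 w.2) := hmeas
  have hPmeas : Measurable (fun w : Esp d × Esp d => ENNReal.ofReal (p w.1 w.2)) :=
    ENNReal.measurable_ofReal.comp hpm
  have hA : Measurable (fun w : Esp d × Esp d => ENNReal.ofReal (Φ w.1 ^ 2)) :=
    ENNReal.measurable_ofReal.comp (((hΦm.comp measurable_fst).pow_const 2))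
  have hB : Measurable (fun w : Esp d × Esp d => ENNReal.ofReal (Φ w.2 ^ 2)) :=
    ENNReal.measurable_ofReal.comp (((hΦm.comp measurable_snd).pow_const 2))
  -- claim 1
  have claim1 : ∫⁻ w, ENNReal.ofReal (p w.1 w.2) * ENNReal.ofReal (Φ w.1 ^ 2) ∂(μ.prod μ)
      = ∫⁻ ω, ENNReal.ofReal (Φ ω ^ 2) ∂μ := by
    rw [lintegral_prod _ (hPmeas.fun_mul hA).aemeasurable]
    have : ∀ᵐ ω ∂μ, (∫⁻ ω', ENNReal.ofReal (p ω ω') * ENNReal.ofReal (Φ ω ^ 2) ∂μ)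
        = ENNReal.ofReal (Φ ω ^ 2) := by
      filter_upwards [hPone] with ω h
      have hsec : Measurable (fun ω' => ENNReal.ofReal (p ω ω')) :=
        ENNReal.measurable_ofReal.comp (hmeas.comp measurable_prodMk_left)
      rw [lintegral_mul_const _ hsec, h, one_mul]
    rw [lintegral_congr_ae this]
  -- claim 2 via swap
  have claim2 : ∫⁻ w, ENNReal.ofReal (p w.1 w.2) * ENNReal.ofReal (Φ w.2 ^ 2) ∂(μ.prod μ)
      = ∫⁻ ω, ENNReal.ofReal (Φ ω ^ 2) ∂μ := by
    have hs := lintegral_prod_swap (μ := μ) (ν := μ)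
      (fun w => ENNReal.ofReal (p w.1 w.2) * ENNReal.ofReal (Φ w.1 ^ 2))
    simp only [Prod.fst_swap, Prod.snd_swap] at hs
    rw [← claim1, ← hs]
    apply lintegral_congr
    intro w
    rw [hsymm w.1 w.2]
  have hsqfin : ∫⁻ ω, ENNReal.ofReal (Φ ω ^ 2) ∂μ < ⊤ := by
    have := hΦsq.hasFiniteIntegral
    rw [hasFiniteIntegral_iff_norm] at this
    refine lt_of_le_of_lt (lintegral_mono fun ω => ?_) this
    exact ENNReal.ofReal_le_ofReal (by rw [Real.norm_eq_abs]; exact le_abs_self _)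
  -- the two real integrands
  set G : Esp d × Esp d → ℝ := fun w => p w.1 w.2 * (Φ w.1 - Φ w.2) ^ 2 with hGdef
  set H : Esp d × Esp d → ℝ := fun w => p w.1 w.2 * (Φ w.1 * (Φ w.1 - Φ w.2)) with hHdef
  have hGm : Measurable G := hpm.mul (((hΦm.comp measurable_fst).sub
    (hΦm.comp measurable_snd)).pow_const 2)
  have hHm : Measurable H := hpm.mul ((hΦm.comp measurable_fst).mul
    ((hΦm.comp measurable_fst).sub (hΦm.comp measurable_snd)))
  -- integrability via the ENNReal bounds
  have hdom : ∫⁻ w, ENNReal.ofReal (p w.1 w.2) *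
      (2 * ENNReal.ofReal (Φ w.1 ^ 2) + 2 * ENNReal.ofReal (Φ w.2 ^ 2)) ∂(μ.prod μ) < ⊤ := by
    have heq : ∀ w : Esp d × Esp d, ENNReal.ofReal (p w.1 w.2) *
        (2 * ENNReal.ofReal (Φ w.1 ^ 2) + 2 * ENNReal.ofReal (Φ w.2 ^ 2))
        = 2 * (ENNReal.ofReal (p w.1 w.2) * ENNReal.ofReal (Φ w.1 ^ 2))
          + 2 * (ENNReal.ofReal (p w.1 w.2) * ENNReal.ofReal (Φ w.2 ^ 2)) := by
      intro w; ring
    rw [lintegral_congr heq, lintegral_add_left ((hPmeas.fun_mul hA).const_mul 2),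
      lintegral_const_mul 2 (hPmeas.fun_mul hA), lintegral_const_mul 2 (hPmeas.fun_mul hB),
      claim1, claim2]
    have h2 : (2:ℝ≥0∞) ≠ ⊤ := by simp
    exact ENNReal.add_lt_top.mpr ⟨ENNReal.mul_lt_top (by simp) hsqfin,
      ENNReal.mul_lt_top (by simp) hsqfin⟩
  have hGint : Integrable G (μ.prod μ) := by
    refine ⟨hGm.aestronglyMeasurable, ?_⟩
    rw [hasFiniteIntegral_iff_norm]
    refine lt_of_le_of_lt (lintegral_mono_ae ?_) hdom
    filter_upwards [hpos] with w hw
    have hb : ‖G w‖ ≤ p w.1 w.2 * (2 * Φ w.1 ^ 2 + 2 * Φ w.2 ^ 2) := by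
      rw [Real.norm_eq_abs, hGdef]
      simp only []
      rw [abs_mul, abs_of_pos hw, abs_of_nonneg (by positivity : (0:ℝ) ≤ (Φ w.1 - Φ w.2) ^ 2)]
      apply mul_le_mul_of_nonneg_left _ (le_of_lt hw)
      nlinarith [sq_nonneg (Φ w.1 + Φ w.2)]
    refine le_trans (ENNReal.ofReal_le_ofReal hb) ?_
    rw [ENNReal.ofReal_mul (le_of_lt hw)]
    exact mul_le_mul_right (ofReal_twosum _ _) _
  have hHint : Integrable H (μ.prod μ) := by
    refine ⟨hHm.aestronglyMeasurable, ?_⟩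
    rw [hasFiniteIntegral_iff_norm]
    refine lt_of_le_of_lt (lintegral_mono_ae ?_) hdom
    filter_upwards [hpos] with w hw
    have habs : |Φ w.1 * (Φ w.1 - Φ w.2)| ≤ 2 * Φ w.1 ^ 2 + 2 * Φ w.2 ^ 2 := by
      rw [abs_le]
      constructor <;> nlinarith [sq_nonneg (Φ w.1 - Φ w.2), sq_nonneg (Φ w.1 + Φ w.2),
        sq_nonneg (Φ w.1), sq_nonneg (Φ w.2)]
    have hb : ‖H w‖ ≤ p w.1 w.2 * (2 * Φ w.1 ^ 2 + 2 * Φ w.2 ^ 2) := by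
      rw [Real.norm_eq_abs, hHdef]
      simp only []
      rw [abs_mul, abs_of_pos hw]
      exact mul_le_mul_of_nonneg_left habs (le_of_lt hw)
    refine le_trans (ENNReal.ofReal_le_ofReal hb) ?_
    rw [ENNReal.ofReal_mul (le_of_lt hw)]
    exact mul_le_mul_right (ofReal_twosum _ _) _
  -- ∫ H = 0
  have hkerΦ : ∀ᵐ ω ∂μ, ∫ ω', p ω ω' * (Φ ω - Φ ω') ∂μ = 0 := by
    filter_upwards [hker, hΦeq] with ω hk hphi
    rw [← hk]
    apply integral_congr_ae
    filter_upwards [hΦeq] with ω' hphi'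
    rw [hphi, hphi']
  have hHzero : ∫ w, H w ∂(μ.prod μ) = 0 := by
    rw [MeasureTheory.integral_prod _ hHint]
    have : ∀ᵐ ω ∂μ, ∫ ω', H (ω, ω') ∂μ = 0 := by
      filter_upwards [hkerΦ] with ω hk
      have : ∀ ω', H (ω, ω') = Φ ω * (p ω ω' * (Φ ω - Φ ω')) := by
        intro ω'; rw [hHdef]; ring
      rw [integral_congr_ae (Filter.Eventually.of_forall this), integral_const_mul, hk, mul_zero]
    rw [integral_congr_ae this, integral_zero]
  -- ∫ G = 0
  have hGzero : ∫ w, G w ∂(μ.prod μ) = 0 := by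
    have hswap : ∫ w, H w.swap ∂(μ.prod μ) = 0 := by
      rw [integral_prod_swap (f := H)]
      exact hHzero
    have hGHH : ∀ w : Esp d × Esp d, G w = H w + H w.swap := by
      intro w
      rw [hGdef, hHdef]
      simp only [Prod.fst_swap, Prod.snd_swap]
      rw [hsymm w.2 w.1]
      ring
    have hswapint : Integrable (fun w : Esp d × Esp d => H w.swap) (μ.prod μ) := hHint.swap
    rw [integral_congr_ae (Filter.Eventually.of_forall hGHH),
      integral_add hHint hswapint, hHzero, hswap, add_zero]
  -- G = 0 a.e., hence Φ w.1 = Φ w.2 a.e.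
  have hGnn : 0 ≤ᵐ[μ.prod μ] G := by
    filter_upwards [hpos] with w hw
    rw [hGdef]
    apply mul_nonneg (le_of_lt hw); positivity
  have hGae0 : G =ᵐ[μ.prod μ] 0 :=
    (integral_eq_zero_iff_of_nonneg_ae hGnn hGint).mp hGzero
  have hconstpair : ∀ᵐ w ∂(μ.prod μ), Φ w.1 = Φ w.2 := by
    filter_upwards [hGae0, hpos] with w h0 hw
    have : (Φ w.1 - Φ w.2) ^ 2 = 0 := by
      rw [hGdef] at h0
      simp only [Pi.zero_apply] at h0
      rcases mul_eq_zero.mp h0 with h | h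
      · exact absurd h (ne_of_gt hw)
      · exact h
    have := pow_eq_zero_iff (n := 2) (by norm_num) |>.mp this
    linarith [sub_eq_zero.mp this]
  -- extract constant
  have hae : ∀ᵐ ω ∂μ, ∀ᵐ ω' ∂μ, Φ ω = Φ ω' := Measure.ae_ae_of_ae_prod hconstpair
  haveI : (ae μ).NeBot := ae_neBot.mpr hμ0
  obtain ⟨ω₀, hω₀⟩ := hae.exists
  set c := Φ ω₀ with hcdef
  have hΦc : ∀ᵐ ω ∂μ, Φ ω = c := hω₀.mono fun ω' h => h.symm
  have hφc : ∀ᵐ ω ∂μ, φ ω = c := by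
    filter_upwards [hΦeq, hΦc] with ω h1 h2
    rw [h1, h2]
  have hint : ∫ ω', φ ω' ∂μ = (μ univ).toReal * c := by
    rw [integral_congr_ae hφc, integral_const, smul_eq_mul, measureReal_def]
  have hT : (μ univ).toReal ≠ 0 := by
    have h1 : μ univ ≠ 0 := fun h => hμ0 (Measure.measure_univ_eq_zero.mp h)
    exact ENNReal.toReal_ne_zero.mpr ⟨h1, measure_ne_top μ univ⟩
  filter_upwards [hφc] with ω h
  rw [h, hint, mul_comm, mul_div_assoc, div_self hT, mul_one]
end
end
end

section
/- With Ω the unique mean-zero solution of LΩ = ω, one has ⟨ω·Ω⟩ = (1/(2|S^d|)) ∬_{S^d×S^d} p(ω,ω')|Ω(ω) − Ω(ω')|² dω dω' > 0. In particular the diffusion coefficient ⟨ω·Ω⟩ is strictly positive. -/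
open MeasureTheory Metric Set
noncomputable section

open scoped RealInnerProductSpace

open Module
open scoped ENNReal NNReal

namespace Stmt6Aux

variable {d : ℕ}

abbrev Fsp (d : ℕ) := EuclideanSpace ℝ (Fin d)

lemma esp_norm_sq {n : ℕ} (x : EuclideanSpace ℝ (Fin n)) : ‖x‖ ^ 2 = ∑ i, x i ^ 2 := by
  rw [← real_inner_self_eq_norm_sq, PiLp.inner_apply]
  simp [sq]

lemma esp_decomp (i : Fin (d+1)) (v : Esp d) :
    ‖v‖ ^ 2 = v i ^ 2 + ∑ k, v (i.succAbove k) ^ 2 := by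
  rw [esp_norm_sq]
  exact Fin.sum_univ_succAbove (fun j => v j ^ 2) i

/-- insert a coordinate -/
def toE (i : Fin (d+1)) (a : ℝ) (y : Fsp d) : Esp d :=
  (WithLp.equiv 2 (Fin (d+1) → ℝ)).symm (i.insertNth a ((WithLp.equiv 2 (Fin d → ℝ)) y))

@[simp] lemma toE_apply_same (i : Fin (d+1)) (a : ℝ) (y : Fsp d) : toE i a y i = a := by
  show Fin.insertNth (α := fun _ => ℝ) i a ((WithLp.equiv 2 (Fin d → ℝ)) y) i = a
  simp

@[simp] lemma toE_apply_succAbove (i : Fin (d+1)) (a : ℝ) (y : Fsp d) (k : Fin d) :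
    toE i a y (i.succAbove k) = y k := by
  show Fin.insertNth (α := fun _ => ℝ) i a ((WithLp.equiv 2 (Fin d → ℝ)) y) (i.succAbove k) = y k
  simp

/-- delete a coordinate -/
def projE (i : Fin (d+1)) (x : Esp d) : Fsp d :=
  (WithLp.equiv 2 (Fin d → ℝ)).symm (fun k => x (i.succAbove k))

@[simp] lemma projE_apply (i : Fin (d+1)) (x : Esp d) (k : Fin d) :
    projE i x k = x (i.succAbove k) := rfl

lemma norm_toE_sub_sq (i : Fin (d+1)) (a b : ℝ) (y z : Fsp d) :
    ‖toE i a y - toE i b z‖ ^ 2 = (a - b) ^ 2 + ‖y - z‖ ^ 2 := by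
  rw [esp_decomp i, esp_norm_sq]
  have h1 : (toE i a y - toE i b z) i = a - b := by
    show toE i a y i - toE i b z i = a - b
    simp
  have h2 : ∀ k, (toE i a y - toE i b z) (i.succAbove k) = (y - z) k := by
    intro k
    show toE i a y (i.succAbove k) - toE i b z (i.succAbove k) = y k - z k
    simp
  rw [h1]
  congr 1
  exact Finset.sum_congr rfl fun k _ => by rw [h2 k]

lemma norm_projE_sub_le (i : Fin (d+1)) (x x' : Esp d) :
    ‖projE i x - projE i x'‖ ≤ ‖x - x'‖ := by
  have h2 : ‖projE i x - projE i x'‖ ^ 2 ≤ ‖x - x'‖ ^ 2 := by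
    rw [esp_norm_sq, esp_decomp i]
    have : ∀ k, (projE i x - projE i x') k = (x - x') (i.succAbove k) := fun k => rfl
    rw [Finset.sum_congr rfl fun k _ => by rw [this k]]
    nlinarith [sq_nonneg ((x - x') i)]
  exact le_of_pow_le_pow_left₀ two_ne_zero (norm_nonneg _) h2

lemma toE_projE (i : Fin (d+1)) (x : Esp d) : toE i (x i) (projE i x) = x := by
  rw [toE, Equiv.symm_apply_eq]
  exact Fin.insertNth_self_removeNth i _

/-- the sqrt of the height function -/
def hfun (y : Fsp d) : ℝ := Real.sqrt (1 - ‖y‖ ^ 2)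

/-- radius of the caps -/
def rr (d : ℕ) : ℝ := Real.sqrt (d / (d + 1))

lemma rr_nonneg : 0 ≤ rr d := Real.sqrt_nonneg _

lemma rr_sq : rr d ^ 2 = d / (d + 1) := by
  rw [rr, Real.sq_sqrt]; positivity

lemma rr_le_one : rr d ≤ 1 := by
  rw [rr]
  apply Real.sqrt_le_one.2
  rw [div_le_one (by positivity)]
  linarith [Nat.cast_nonneg (α := ℝ) d]

lemma one_div_succ_pos : (0:ℝ) < 1 / (d + 1) := by positivity

lemma sub_norm_sq_ge {y : Fsp d} (hy : y ∈ closedBall (0 : Fsp d) (rr d)) :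
    1 / (d + 1 : ℝ) ≤ 1 - ‖y‖ ^ 2 := by
  rw [mem_closedBall, dist_zero_right] at hy
  have h1 : ‖y‖ ^ 2 ≤ d / (d + 1) := by
    rw [← rr_sq]
    exact pow_le_pow_left₀ (norm_nonneg _) hy 2
  have h2 : (d : ℝ) / (d + 1) + 1 / (d + 1) = 1 := by field_simp
  linarith

lemma hfun_lip {y z : Fsp d} (hy : y ∈ closedBall (0 : Fsp d) (rr d))
    (hz : z ∈ closedBall (0 : Fsp d) (rr d)) :
    |hfun y - hfun z| ≤ Real.sqrt (d + 1) * ‖y - z‖ := by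
  have hay := sub_norm_sq_ge hy
  have haz := sub_norm_sq_ge hz
  have hd1 := one_div_succ_pos (d := d)
  set sa := hfun y with hsa
  set sb := hfun z with hsb
  have h1 : sa ^ 2 = 1 - ‖y‖ ^ 2 := Real.sq_sqrt (by linarith)
  have h2 : sb ^ 2 = 1 - ‖z‖ ^ 2 := Real.sq_sqrt (by linarith)
  have hsa1 : Real.sqrt (1 / (d + 1)) ≤ sa := by
    rw [hsa, hfun]; exact Real.sqrt_le_sqrt hay
  have hsb1 : Real.sqrt (1 / (d + 1)) ≤ sb := by
    rw [hsb, hfun]; exact Real.sqrt_le_sqrt haz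
  have hc0 : 0 < Real.sqrt (1 / (d + 1)) := Real.sqrt_pos.2 hd1
  have hmul : (sa - sb) * (sa + sb) = ‖z‖ ^ 2 - ‖y‖ ^ 2 := by nlinarith
  -- bound |‖z‖^2 - ‖y‖^2|
  rw [mem_closedBall, dist_zero_right] at hy hz
  have hyr : ‖y‖ ≤ 1 := hy.trans rr_le_one
  have hzr : ‖z‖ ≤ 1 := hz.trans rr_le_one
  have h3 : |‖z‖ - ‖y‖| ≤ ‖y - z‖ := by
    have h := abs_norm_sub_norm_le z y
    rwa [norm_sub_rev z y] at h
  have hup : |‖z‖ ^ 2 - ‖y‖ ^ 2| ≤ 2 * ‖y - z‖ := by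
    have e1 : ‖z‖ ^ 2 - ‖y‖ ^ 2 = (‖z‖ - ‖y‖) * (‖z‖ + ‖y‖) := by ring
    rw [e1, abs_mul, abs_of_nonneg (show (0:ℝ) ≤ ‖z‖ + ‖y‖ by positivity)]
    have : |‖z‖ - ‖y‖| * (‖z‖ + ‖y‖) ≤ ‖y - z‖ * 2 := by
      apply mul_le_mul h3 (by linarith) (by positivity) (norm_nonneg _)
    linarith
  -- conclude
  have hkey : |sa - sb| * (2 * Real.sqrt (1 / (d + 1))) ≤ 2 * ‖y - z‖ := by
    calc |sa - sb| * (2 * Real.sqrt (1 / (d + 1))) ≤ |sa - sb| * (sa + sb) := by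
          apply mul_le_mul_of_nonneg_left (by linarith) (abs_nonneg _)
      _ = |(sa - sb) * (sa + sb)| := by
          have h9 : (0:ℝ) ≤ sa + sb := by linarith
          rw [abs_mul, abs_of_nonneg h9]
      _ = |‖z‖ ^ 2 - ‖y‖ ^ 2| := by rw [hmul]
      _ ≤ 2 * ‖y - z‖ := hup
  have hinv : Real.sqrt (1 / (d + 1)) * Real.sqrt (d + 1) = 1 := by
    rw [← Real.sqrt_mul hd1.le]
    rw [one_div_mul_cancel (by positivity), Real.sqrt_one]
  nlinarith [abs_nonneg (sa - sb), Real.sqrt_nonneg (d + 1 : ℝ), norm_nonneg (y - z)]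

/-- graph map -/
def gmap (i : Fin (d+1)) (s : ℝ) (y : Fsp d) : Esp d := toE i (s * hfun y) y

lemma gmap_lip (i : Fin (d+1)) {s : ℝ} (hs : |s| = 1) :
    LipschitzOnWith (Real.toNNReal (1 + Real.sqrt (d + 1))) (gmap i s)
      (closedBall (0 : Fsp d) (rr d)) := by
  rw [lipschitzOnWith_iff_dist_le_mul]
  intro y hy z hz
  rw [dist_eq_norm, dist_eq_norm]
  have hKr : (Real.toNNReal (1 + Real.sqrt (d + 1)) : ℝ) = 1 + Real.sqrt (d + 1) := by
    rw [Real.coe_toNNReal]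
    positivity
  rw [hKr]
  have hsq : ‖gmap i s y - gmap i s z‖ ^ 2
      = (s * hfun y - s * hfun z) ^ 2 + ‖y - z‖ ^ 2 := norm_toE_sub_sq i _ _ y z
  have hlip := hfun_lip hy hz
  have hs2 : s ^ 2 = 1 := by
    have := sq_abs s
    rw [hs] at this
    linarith
  have h1 : (s * hfun y - s * hfun z) ^ 2 = (hfun y - hfun z) ^ 2 := by
    have : (s * hfun y - s * hfun z) ^ 2 = s ^ 2 * (hfun y - hfun z) ^ 2 := by ring
    rw [this, hs2, one_mul]
  have hd0 : Real.sqrt ((d : ℝ) + 1) ^ 2 = (d : ℝ) + 1 := Real.sq_sqrt (by positivity)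
  apply le_of_pow_le_pow_left₀ two_ne_zero (by positivity)
  rw [mul_pow, hsq, h1]
  have h2 : (hfun y - hfun z) ^ 2 ≤ Real.sqrt ((d:ℝ) + 1) ^ 2 * ‖y - z‖ ^ 2 := by
    have h3 := pow_le_pow_left₀ (abs_nonneg (hfun y - hfun z)) hlip 2
    rw [sq_abs, mul_pow] at h3
    exact h3
  nlinarith [Real.sqrt_nonneg ((d:ℝ) + 1), sq_nonneg ‖y - z‖,
    mul_nonneg (Real.sqrt_nonneg ((d:ℝ) + 1)) (sq_nonneg ‖y - z‖)]

/-- the cap -/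
def cap (i : Fin (d+1)) (s : ℝ) : Set (Esp d) :=
  {x | x ∈ sphere (0 : Esp d) 1 ∧ 1 / Real.sqrt (d + 1) ≤ s * x i}

lemma cap_subset_image (i : Fin (d+1)) {s : ℝ} (hs : s = 1 ∨ s = -1) :
    cap i s ⊆ gmap i s '' closedBall (0 : Fsp d) (rr d) := by
  rintro x ⟨hx1, hx2⟩
  rw [mem_sphere_zero_iff_norm] at hx1
  have hs1 : |s| = 1 := by rcases hs with h | h <;> simp [h]
  have hs2 : s ^ 2 = 1 := by
    have := sq_abs s; rw [hs1] at this; linarith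
  have hd1 : (0:ℝ) < Real.sqrt (d + 1) := Real.sqrt_pos.2 (by positivity)
  have hxi2 : 1 / ((d:ℝ) + 1) ≤ x i ^ 2 := by
    have h1 : (1 / Real.sqrt (d + 1)) ^ 2 ≤ (s * x i) ^ 2 := by
      apply pow_le_pow_left₀ (by positivity) hx2
    have h2 : (1 / Real.sqrt ((d:ℝ) + 1)) ^ 2 = 1 / ((d:ℝ) + 1) := by
      rw [div_pow, one_pow, Real.sq_sqrt (by positivity)]
    have h3 : (s * x i) ^ 2 = x i ^ 2 := by
      have : (s * x i) ^ 2 = s ^ 2 * x i ^ 2 := by ring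
      rw [this, hs2, one_mul]
    rw [h2, h3] at h1
    exact h1
  set y := projE i x with hy
  have hdec : (1:ℝ) = x i ^ 2 + ‖y‖ ^ 2 := by
    have h := esp_decomp i x
    rw [hx1, one_pow] at h
    have h2 : ‖y‖ ^ 2 = ∑ k, x (i.succAbove k) ^ 2 := by
      rw [esp_norm_sq]
      exact Finset.sum_congr rfl fun k _ => rfl
    rw [h2]
    exact h
  have hyball : y ∈ closedBall (0 : Fsp d) (rr d) := by
    rw [mem_closedBall, dist_zero_right]
    have h4 : ‖y‖ ^ 2 ≤ (d:ℝ) / (d + 1) := by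
      have h5 : (d : ℝ) / (d + 1) + 1 / (d + 1) = 1 := by field_simp
      linarith
    rw [← rr_sq] at h4
    nlinarith [norm_nonneg y, rr_nonneg (d := d)]
  refine ⟨y, hyball, ?_⟩
  have hval : hfun y = |x i| := by
    rw [hfun]
    have : 1 - ‖y‖ ^ 2 = x i ^ 2 := by linarith
    rw [this, Real.sqrt_sq_eq_abs]
  have hpos : 0 < s * x i := lt_of_lt_of_le (by positivity) hx2
  have habs : s * |x i| = x i := by
    rcases hs with h | h
    · subst h
      rw [one_mul] at hpos ⊢
      rw [abs_of_pos hpos]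
    · subst h
      rw [neg_one_mul] at hpos
      have hneg : x i < 0 := by linarith
      rw [abs_of_neg hneg]
      ring
  rw [gmap, hval, habs, hy, toE_projE]

lemma sphere_subset_caps :
    sphere (0 : Esp d) 1 ⊆ ⋃ i : Fin (d+1), cap i 1 ∪ cap i (-1) := by
  intro x hx
  have hx1 : ‖x‖ = 1 := mem_sphere_zero_iff_norm.1 hx
  have hsum : ∑ j, x j ^ 2 = 1 := by rw [← esp_norm_sq, hx1, one_pow]
  have hex : ∃ j, 1 / ((d:ℝ) + 1) ≤ x j ^ 2 := by
    by_contra hcon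
    push_neg at hcon
    have : ∑ j, x j ^ 2 < ∑ _j : Fin (d+1), 1 / ((d:ℝ) + 1) :=
      Finset.sum_lt_sum_of_nonempty (by simp) (fun j _ => hcon j)
    rw [hsum, Finset.sum_const, Finset.card_univ, Fintype.card_fin, nsmul_eq_mul,
      mul_one_div] at this
    push_cast at this
    rw [div_self (by positivity : ((d:ℝ)+1) ≠ 0)] at this
    exact lt_irrefl _ this
  obtain ⟨j, hj⟩ := hex
  have hd1 : (0:ℝ) < Real.sqrt (d + 1) := Real.sqrt_pos.2 (by positivity)
  have hsq : (1 / Real.sqrt ((d:ℝ) + 1)) ^ 2 = 1 / ((d:ℝ) + 1) := by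
    rw [div_pow, one_pow, Real.sq_sqrt (by positivity)]
  have habs : 1 / Real.sqrt ((d:ℝ) + 1) ≤ |x j| := by
    apply le_of_pow_le_pow_left₀ two_ne_zero (abs_nonneg _)
    rw [hsq, sq_abs]
    exact hj
  rw [mem_iUnion]
  refine ⟨j, ?_⟩
  rcases abs_cases (x j) with ⟨h1, _⟩ | ⟨h1, _⟩
  · left; exact ⟨hx, by rw [one_mul]; linarith [habs.trans_eq h1]⟩
  · right; exact ⟨hx, by rw [neg_one_mul]; linarith [habs.trans_eq h1]⟩

lemma haarF (d : ℕ) : (μH[(d : ℝ)] : Measure (Fsp d)).IsAddHaarMeasure := by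
  have h : ((d : ℝ)) = ((finrank ℝ (Fsp d) : ℕ) : ℝ) := by
    rw [finrank_euclideanSpace_fin]
  rw [h]
  infer_instance

lemma sphμ_univ (d : ℕ) : sphμ d univ = μH[(d : ℝ)] (sphere (0 : Esp d) 1) := by
  rw [sphμ, Measure.restrict_apply_univ]

lemma sphμ_lt_top (d : ℕ) : sphμ d univ < ⊤ := by
  haveI := haarF d
  rw [sphμ_univ]
  have hcap : ∀ (i : Fin (d+1)) (s : ℝ), s = 1 ∨ s = -1 →
      μH[(d : ℝ)] (cap i s) < ⊤ := by
    intro i s hs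
    have hs1 : |s| = 1 := by rcases hs with h | h <;> simp [h]
    calc μH[(d : ℝ)] (cap i s) ≤ μH[(d : ℝ)] (gmap i s '' closedBall (0 : Fsp d) (rr d)) :=
        measure_mono (cap_subset_image i hs)
      _ ≤ (Real.toNNReal (1 + Real.sqrt (d + 1)) : ℝ≥0∞) ^ (d : ℝ)
            * μH[(d : ℝ)] (closedBall (0 : Fsp d) (rr d)) :=
        (gmap_lip i hs1).hausdorffMeasure_image_le (by positivity)
      _ < ⊤ := by
        apply ENNReal.mul_lt_top
        · exact ENNReal.rpow_lt_top_of_nonneg (by positivity) ENNReal.coe_ne_top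
        · exact (isCompact_closedBall _ _).measure_lt_top
  calc μH[(d : ℝ)] (sphere (0 : Esp d) 1)
      ≤ μH[(d : ℝ)] (⋃ i : Fin (d+1), cap i 1 ∪ cap i (-1)) := measure_mono sphere_subset_caps
    _ ≤ ∑' i : Fin (d+1), μH[(d : ℝ)] (cap i 1 ∪ cap i (-1)) := measure_iUnion_le _
    _ < ⊤ := by
        rw [tsum_fintype]
        refine ENNReal.sum_lt_top.2 fun i _ => ?_
        calc μH[(d : ℝ)] (cap i 1 ∪ cap i (-1))
            ≤ μH[(d : ℝ)] (cap i 1) + μH[(d : ℝ)] (cap i (-1)) := measure_union_le _ _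
          _ < ⊤ := ENNReal.add_lt_top.2 ⟨hcap i 1 (Or.inl rfl), hcap i (-1) (Or.inr rfl)⟩

lemma sphμ_pos (d : ℕ) : 0 < sphμ d univ := by
  haveI := haarF d
  rw [sphμ_univ]
  set i : Fin (d+1) := 0
  have hsub : ball (0 : Fsp d) 1 ⊆ projE i '' sphere (0 : Esp d) 1 := by
    intro y hyb
    rw [mem_ball, dist_zero_right] at hyb
    have hy2 : ‖y‖ ^ 2 ≤ 1 := by nlinarith [norm_nonneg y]
    refine ⟨toE i (hfun y) y, ?_, ?_⟩
    · rw [mem_sphere_zero_iff_norm]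
      have h1 : ‖toE i (hfun y) y‖ ^ 2 = 1 := by
        rw [esp_decomp i]
        have h2 : ∑ k, toE i (hfun y) y (i.succAbove k) ^ 2 = ‖y‖ ^ 2 := by
          rw [esp_norm_sq]
          exact Finset.sum_congr rfl fun k _ => by rw [toE_apply_succAbove]
        rw [h2, toE_apply_same, hfun, Real.sq_sqrt (by linarith)]
        ring
      calc ‖toE i (hfun y) y‖ = Real.sqrt (‖toE i (hfun y) y‖ ^ 2) :=
            (Real.sqrt_sq (norm_nonneg _)).symm
        _ = 1 := by rw [h1, Real.sqrt_one]
    · show projE i (toE i (hfun y) y) = y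
      have : ∀ k, projE i (toE i (hfun y) y) k = y k := fun k => by
        rw [projE_apply, toE_apply_succAbove]
      ext k
      exact this k
  have hb : 0 < μH[(d : ℝ)] (ball (0 : Fsp d) 1) := measure_ball_pos _ _ one_pos
  have him : μH[(d : ℝ)] (projE i '' sphere (0 : Esp d) 1)
      ≤ μH[(d : ℝ)] (sphere (0 : Esp d) 1) := by
    have hlip : LipschitzWith 1 (projE i : Esp d → Fsp d) := by
      rw [lipschitzWith_iff_dist_le_mul]
      intro x x'
      rw [dist_eq_norm, dist_eq_norm, NNReal.coe_one, one_mul]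
      exact norm_projE_sub_le i x x'
    have h := hlip.hausdorffMeasure_image_le (by positivity : (0:ℝ) ≤ (d:ℝ)) (sphere (0 : Esp d) 1)
    simpa using h
  exact lt_of_lt_of_le (lt_of_lt_of_le hb (measure_mono hsub)) him

end Stmt6Aux

/-- the diffusion coefficient `⟨ω·Ω⟩` equals
`(1/(2|S^d|)) ∬ p(ω,ω')|Ω(ω) − Ω(ω')|² dωdω'` and is strictly positive. -/
theorem stmt6 (d : ℕ) (p : Esp d → Esp d → ℝ)
    (hmeas : Measurable (Function.uncurry p))
    (hsymm : ∀ ω ω', p ω ω' = p ω' ω)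
    (hpos : ∀ᵐ w ∂((sphμ d).prod (sphμ d)), 0 < p w.1 w.2)
    (hnorm : ∀ᵐ ω ∂(sphμ d), ∫ ω', p ω ω' ∂(sphμ d) = 1)
    (hp2 : MemLp (Function.uncurry p) 2 ((sphμ d).prod (sphμ d)))
    (Ω : Esp d → Esp d) (hΩ2 : MemLp Ω 2 (sphμ d))
    (hΩ0 : (∫ ω, Ω ω ∂(sphμ d)) = 0)
    (hΩL : ∀ᵐ ω ∂(sphμ d), (∫ ω', p ω ω' • (Ω ω - Ω ω') ∂(sphμ d)) = ω) :
    (∫ ω, ⟪ω, Ω ω⟫ ∂(sphμ d)) / ((sphμ d) univ).toReal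
        = (1 / (2 * ((sphμ d) univ).toReal))
          * ∫ ω, ∫ ω', p ω ω' * ‖Ω ω - Ω ω'‖^2 ∂(sphμ d) ∂(sphμ d) ∧
    0 < (∫ ω, ⟪ω, Ω ω⟫ ∂(sphμ d)) / ((sphμ d) univ).toReal := by
  classical
  haveI : IsFiniteMeasure (sphμ d) := ⟨Stmt6Aux.sphμ_lt_top d⟩
  set μ := sphμ d with hμdef
  have hΩm : AEStronglyMeasurable Ω μ := hΩ2.aestronglyMeasurable
  have hPm : AEStronglyMeasurable (fun w : Esp d × Esp d => p w.1 w.2) (μ.prod μ) :=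
    hmeas.aestronglyMeasurable
  have hΩ1m : AEStronglyMeasurable (fun w : Esp d × Esp d => Ω w.1) (μ.prod μ) := hΩm.comp_fst
  have hΩ2m : AEStronglyMeasurable (fun w : Esp d × Esp d => Ω w.2) (μ.prod μ) := hΩm.comp_snd
  have hpos' : ∀ᵐ w ∂(μ.prod μ), 0 ≤ p w.1 w.2 := hpos.mono fun w h => h.le
  have hpos_ae : ∀ᵐ ω ∂μ, ∀ᵐ ω' ∂μ, 0 ≤ p ω ω' := Measure.ae_ae_of_ae_prod hpos'
  have hnorm' : ∀ᵐ ω ∂μ, Integrable (fun ω' => p ω ω') μ := by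
    filter_upwards [hnorm] with ω h
    by_contra hint
    rw [integral_undef hint] at h
    exact one_ne_zero h.symm
  have hΩsq : Integrable (fun ω => ‖Ω ω‖ ^ 2) μ := by
    have h := hΩ2.integrable_norm_rpow two_ne_zero ENNReal.ofNat_ne_top
    refine h.congr (Filter.Eventually.of_forall fun ω => ?_)
    have h2 : ((2 : ℝ≥0∞)).toReal = ((2 : ℕ) : ℝ) := by norm_num
    show ‖Ω ω‖ ^ ((2 : ℝ≥0∞)).toReal = ‖Ω ω‖ ^ 2
    rw [h2, Real.rpow_natCast]
  -- product integrability of p * |Ω(fst)|^2 and p * |Ω(snd)|^2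
  have hmA : AEStronglyMeasurable (fun w : Esp d × Esp d => p w.1 w.2 * ‖Ω w.1‖ ^ 2) (μ.prod μ) :=
    hPm.mul ((continuous_pow 2).comp_aestronglyMeasurable hΩ1m.norm)
  have IntA : Integrable (fun w : Esp d × Esp d => p w.1 w.2 * ‖Ω w.1‖ ^ 2) (μ.prod μ) := by
    rw [integrable_prod_iff hmA]
    constructor
    · filter_upwards [hnorm'] with ω hω
      exact hω.mul_const _
    · have heq : (fun ω => ∫ ω', ‖p ω ω' * ‖Ω ω‖ ^ 2‖ ∂μ) =ᵐ[μ] fun ω => ‖Ω ω‖ ^ 2 := by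
        filter_upwards [hnorm, hpos_ae] with ω h1 h2
        have h3 : (fun ω' => ‖p ω ω' * ‖Ω ω‖ ^ 2‖) =ᵐ[μ] fun ω' => p ω ω' * ‖Ω ω‖ ^ 2 := by
          filter_upwards [h2] with ω' h4
          rw [Real.norm_eq_abs, abs_of_nonneg (by positivity)]
        rw [integral_congr_ae h3, integral_mul_const, h1, one_mul]
      exact hΩsq.congr heq.symm
  have IntB : Integrable (fun w : Esp d × Esp d => p w.1 w.2 * ‖Ω w.2‖ ^ 2) (μ.prod μ) := by
    have h := IntA.swap
    refine h.congr (Filter.Eventually.of_forall fun w => ?_)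
    show p w.2 w.1 * ‖Ω w.2‖ ^ 2 = p w.1 w.2 * ‖Ω w.2‖ ^ 2
    rw [hsymm w.2 w.1]
  -- integrability of the main integrands on the product
  have hmG : AEStronglyMeasurable
      (fun w : Esp d × Esp d => p w.1 w.2 * ‖Ω w.1 - Ω w.2‖ ^ 2) (μ.prod μ) :=
    hPm.mul ((continuous_pow 2).comp_aestronglyMeasurable (hΩ1m.sub hΩ2m).norm)
  have IntG : Integrable
      (fun w : Esp d × Esp d => p w.1 w.2 * ‖Ω w.1 - Ω w.2‖ ^ 2) (μ.prod μ) := by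
    refine Integrable.mono' ((IntA.add IntB).const_mul 2) hmG ?_
    filter_upwards [hpos'] with w hw
    rw [Real.norm_eq_abs, abs_of_nonneg (by positivity)]
    have h2 : ‖Ω w.1 - Ω w.2‖ ^ 2 ≤ 2 * (‖Ω w.1‖ ^ 2 + ‖Ω w.2‖ ^ 2) := by
      have h1 : ‖Ω w.1 - Ω w.2‖ ≤ ‖Ω w.1‖ + ‖Ω w.2‖ := norm_sub_le _ _
      nlinarith [norm_nonneg (Ω w.1 - Ω w.2), norm_nonneg (Ω w.1), norm_nonneg (Ω w.2),
        sq_nonneg (‖Ω w.1‖ - ‖Ω w.2‖)]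
    calc p w.1 w.2 * ‖Ω w.1 - Ω w.2‖ ^ 2
        ≤ p w.1 w.2 * (2 * (‖Ω w.1‖ ^ 2 + ‖Ω w.2‖ ^ 2)) := mul_le_mul_of_nonneg_left h2 hw
      _ = 2 * (p w.1 w.2 * ‖Ω w.1‖ ^ 2 + p w.1 w.2 * ‖Ω w.2‖ ^ 2) := by ring
  have hmF : AEStronglyMeasurable
      (fun w : Esp d × Esp d => p w.1 w.2 * ⟪Ω w.1 - Ω w.2, Ω w.1⟫) (μ.prod μ) :=
    hPm.mul ((hΩ1m.sub hΩ2m).inner hΩ1m)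
  have IntF : Integrable
      (fun w : Esp d × Esp d => p w.1 w.2 * ⟪Ω w.1 - Ω w.2, Ω w.1⟫) (μ.prod μ) := by
    refine Integrable.mono' ((IntA.add IntB).const_mul 2) hmF ?_
    filter_upwards [hpos'] with w hw
    have h1 : |⟪Ω w.1 - Ω w.2, Ω w.1⟫| ≤ ‖Ω w.1 - Ω w.2‖ * ‖Ω w.1‖ := abs_real_inner_le_norm _ _
    have h2 : ‖Ω w.1 - Ω w.2‖ * ‖Ω w.1‖ ≤ 2 * (‖Ω w.1‖ ^ 2 + ‖Ω w.2‖ ^ 2) := by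
      have h3 : ‖Ω w.1 - Ω w.2‖ ≤ ‖Ω w.1‖ + ‖Ω w.2‖ := norm_sub_le _ _
      nlinarith [norm_nonneg (Ω w.1), norm_nonneg (Ω w.2), norm_nonneg (Ω w.1 - Ω w.2),
        sq_nonneg (‖Ω w.1‖ - ‖Ω w.2‖), sq_nonneg (‖Ω w.1‖ + ‖Ω w.2‖)]
    rw [Real.norm_eq_abs, abs_mul, abs_of_nonneg hw]
    calc p w.1 w.2 * |⟪Ω w.1 - Ω w.2, Ω w.1⟫|
        ≤ p w.1 w.2 * (2 * (‖Ω w.1‖ ^ 2 + ‖Ω w.2‖ ^ 2)) :=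
          mul_le_mul_of_nonneg_left (h1.trans h2) hw
      _ = 2 * (p w.1 w.2 * ‖Ω w.1‖ ^ 2 + p w.1 w.2 * ‖Ω w.2‖ ^ 2) := by ring
  -- a.e. sections
  have hsecG : ∀ᵐ ω ∂μ, Integrable (fun ω' => p ω ω' * ‖Ω ω - Ω ω'‖ ^ 2) μ :=
    ((integrable_prod_iff hmG).1 IntG).1
  have hvec : ∀ᵐ ω ∂μ, Integrable (fun ω' => p ω ω' • (Ω ω - Ω ω')) μ := by
    filter_upwards [hsecG, hnorm', hpos_ae] with ω h1 h2 h3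
    have hm : AEStronglyMeasurable (fun ω' => p ω ω' • (Ω ω - Ω ω')) μ :=
      h2.aestronglyMeasurable.smul (aestronglyMeasurable_const.sub hΩm)
    refine Integrable.mono' (h2.add h1) hm ?_
    filter_upwards [h3] with ω' hp0
    rw [norm_smul, Real.norm_eq_abs, abs_of_nonneg hp0]
    have h5 : 2 * ‖Ω ω - Ω ω'‖ ≤ 1 + ‖Ω ω - Ω ω'‖ ^ 2 := by
      nlinarith [sq_nonneg (‖Ω ω - Ω ω'‖ - 1)]
    have h6 := mul_le_mul_of_nonneg_left h5 hp0
    simp only [Pi.add_apply]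
    nlinarith [h6]
  -- pointwise identity from the equation LΩ = ω
  have keyA : ∀ᵐ ω ∂μ, ⟪ω, Ω ω⟫ = ∫ ω', p ω ω' * ⟪Ω ω - Ω ω', Ω ω⟫ ∂μ := by
    filter_upwards [hΩL, hvec] with ω h1 h2
    calc ⟪ω, Ω ω⟫ = ⟪(∫ ω', p ω ω' • (Ω ω - Ω ω') ∂μ), Ω ω⟫ := by rw [h1]
      _ = ⟪Ω ω, (∫ ω', p ω ω' • (Ω ω - Ω ω') ∂μ)⟫ := real_inner_comm _ _
      _ = ∫ ω', ⟪Ω ω, p ω ω' • (Ω ω - Ω ω')⟫ ∂μ := (integral_inner h2 (Ω ω)).symm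
      _ = ∫ ω', p ω ω' * ⟪Ω ω - Ω ω', Ω ω⟫ ∂μ := by
          refine integral_congr_ae (Filter.Eventually.of_forall fun ω' => ?_)
          show ⟪Ω ω, p ω ω' • (Ω ω - Ω ω')⟫ = p ω ω' * ⟪Ω ω - Ω ω', Ω ω⟫
          rw [real_inner_smul_right, real_inner_comm]
  have hLHS : (∫ ω, ⟪ω, Ω ω⟫ ∂μ)
      = ∫ w : Esp d × Esp d, p w.1 w.2 * ⟪Ω w.1 - Ω w.2, Ω w.1⟫ ∂(μ.prod μ) := by
    rw [integral_congr_ae keyA]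
    exact (integral_prod _ IntF).symm
  have hswap : (∫ w : Esp d × Esp d, p w.1 w.2 * ⟪Ω w.1 - Ω w.2, Ω w.1⟫ ∂(μ.prod μ))
      = ∫ w : Esp d × Esp d, p w.1 w.2 * ⟪Ω w.2 - Ω w.1, Ω w.2⟫ ∂(μ.prod μ) := by
    rw [← integral_prod_swap (fun w : Esp d × Esp d => p w.1 w.2 * ⟪Ω w.1 - Ω w.2, Ω w.1⟫)]
    refine integral_congr_ae (Filter.Eventually.of_forall fun w => ?_)
    show p w.2 w.1 * ⟪Ω w.2 - Ω w.1, Ω w.2⟫ = p w.1 w.2 * ⟪Ω w.2 - Ω w.1, Ω w.2⟫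
    rw [hsymm w.2 w.1]
  have IntF' : Integrable
      (fun w : Esp d × Esp d => p w.1 w.2 * ⟪Ω w.2 - Ω w.1, Ω w.2⟫) (μ.prod μ) := by
    have h := IntF.swap
    refine h.congr (Filter.Eventually.of_forall fun w => ?_)
    show p w.2 w.1 * ⟪Ω w.2 - Ω w.1, Ω w.2⟫ = p w.1 w.2 * ⟪Ω w.2 - Ω w.1, Ω w.2⟫
    rw [hsymm w.2 w.1]
  have hdouble : 2 * (∫ w : Esp d × Esp d, p w.1 w.2 * ⟪Ω w.1 - Ω w.2, Ω w.1⟫ ∂(μ.prod μ))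
      = ∫ w : Esp d × Esp d, p w.1 w.2 * ‖Ω w.1 - Ω w.2‖ ^ 2 ∂(μ.prod μ) := by
    rw [two_mul]
    nth_rewrite 2 [hswap]
    rw [← integral_add IntF IntF']
    refine integral_congr_ae (Filter.Eventually.of_forall fun w => ?_)
    have hinner : ⟪Ω w.1 - Ω w.2, Ω w.1⟫ + ⟪Ω w.2 - Ω w.1, Ω w.2⟫ = ‖Ω w.1 - Ω w.2‖ ^ 2 := by
      rw [← real_inner_self_eq_norm_sq, inner_sub_right]
      have hneg : Ω w.2 - Ω w.1 = -(Ω w.1 - Ω w.2) := (neg_sub _ _).symm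
      rw [hneg, inner_neg_left]
      ring
    calc p w.1 w.2 * ⟪Ω w.1 - Ω w.2, Ω w.1⟫ + p w.1 w.2 * ⟪Ω w.2 - Ω w.1, Ω w.2⟫
        = p w.1 w.2 * (⟪Ω w.1 - Ω w.2, Ω w.1⟫ + ⟪Ω w.2 - Ω w.1, Ω w.2⟫) := by ring
      _ = p w.1 w.2 * ‖Ω w.1 - Ω w.2‖ ^ 2 := by rw [hinner]
  have hRHSiter : (∫ ω, ∫ ω', p ω ω' * ‖Ω ω - Ω ω'‖ ^ 2 ∂μ ∂μ)
      = ∫ w : Esp d × Esp d, p w.1 w.2 * ‖Ω w.1 - Ω w.2‖ ^ 2 ∂(μ.prod μ) :=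
    (integral_prod _ IntG).symm
  -- positivity of the double integral
  have hμ0 : μ ≠ 0 := by
    intro h
    have := Stmt6Aux.sphμ_pos d
    rw [← hμdef, h] at this
    simp at this
  have hD : 0 < (μ univ).toReal :=
    ENNReal.toReal_pos (Stmt6Aux.sphμ_pos d).ne' (Stmt6Aux.sphμ_lt_top d).ne
  have hJnonneg : 0 ≤ ∫ w : Esp d × Esp d, p w.1 w.2 * ‖Ω w.1 - Ω w.2‖ ^ 2 ∂(μ.prod μ) := by
    refine integral_nonneg_of_ae (hpos'.mono fun w h => ?_)
    positivity
  have hJpos : 0 < ∫ w : Esp d × Esp d, p w.1 w.2 * ‖Ω w.1 - Ω w.2‖ ^ 2 ∂(μ.prod μ) := by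
    rcases hJnonneg.lt_or_eq with h | h
    · exact h
    exfalso
    have hzero : (fun w : Esp d × Esp d => p w.1 w.2 * ‖Ω w.1 - Ω w.2‖ ^ 2) =ᵐ[μ.prod μ] 0 :=
      (integral_eq_zero_iff_of_nonneg_ae (hpos'.mono fun w hwp => by positivity) IntG).1 h.symm
    have hconst : ∀ᵐ w ∂(μ.prod μ), Ω w.1 = Ω w.2 := by
      filter_upwards [hzero, hpos] with w h1 h2
      have h3 : p w.1 w.2 * ‖Ω w.1 - Ω w.2‖ ^ 2 = 0 := h1
      rcases mul_eq_zero.1 h3 with h4 | h4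
      · exact absurd h4 h2.ne'
      · have h5 : Ω w.1 - Ω w.2 = 0 := by
          rwa [pow_eq_zero_iff two_ne_zero, norm_eq_zero] at h4
        exact sub_eq_zero.1 h5
    have hae2 : ∀ᵐ ω ∂μ, ∀ᵐ ω' ∂μ, Ω ω = Ω ω' := Measure.ae_ae_of_ae_prod hconst
    have hsph : ∀ᵐ ω ∂μ, ω ∈ Metric.sphere (0 : Esp d) 1 := by
      rw [hμdef, sphμ]
      exact ae_restrict_mem isClosed_sphere.measurableSet
    haveI : (ae μ).NeBot := ae_neBot.2 hμ0
    obtain ⟨ω, h1, h2, h3⟩ := ((hΩL.and (hae2.and hsph))).exists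
    have hz : (∫ ω', p ω ω' • (Ω ω - Ω ω') ∂μ) = 0 := by
      have h6 : (fun ω' => p ω ω' • (Ω ω - Ω ω')) =ᵐ[μ] fun _ => (0 : Esp d) := by
        filter_upwards [h2] with ω' h7
        rw [show Ω ω - Ω ω' = 0 from sub_eq_zero.2 h7, smul_zero]
      rw [integral_congr_ae h6, integral_const, smul_zero]
    have hω0 : ω = (0 : Esp d) := by rw [← h1]; exact hz
    rw [mem_sphere_zero_iff_norm, hω0] at h3
    simp at h3
  constructor
  · rw [hLHS, hRHSiter, ← hdouble]
    field_simp
  · rw [hLHS]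
    have hI : 0 < ∫ w : Esp d × Esp d, p w.1 w.2 * ⟪Ω w.1 - Ω w.2, Ω w.1⟫ ∂(μ.prod μ) := by
      linarith [hdouble, hJpos]
    exact div_pos hI hD
end
end
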